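/- Let T be a string of length n over a linearly ordered alphabet and let M be the list of all n rotations of T sorted lexicographically (as a multiset). Then the string F formed by the first characters of the rows of M equals the string obtained by sorting the characters of T in nondecreasing order. -/

import Mathlib

/-- The list of all `n` rotations of a string `T` of length `n`:
the `i`-th rotation is `T[i..n−1]T[0..i−1]`. -/
def rotations {α : Type*} (T : List α) : List (List α) :=
  (List.range T.length).map fun i => T.drop i ++ T.take i

/-- The matrix `M` of `T`: the multiset of all rotations of `T`,
sorted lexicographically. -/
def sortedRotations {α : Type*} [LinearOrder α] (T : List α) : List (List α) :=
  Multiset.sort (rotations T : Multiset (List α)) (· ≤ ·)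

/-- the string `F` of first characters of the lexicographically sorted
rotations of `T` equals the string obtained by sorting the characters of `T` in
nondecreasing order. -/
lemma head?_le_of_le {α : Type*} [LinearOrder α] {a b : List α} (h : a ≤ b)
    {x y : α} (hx : x ∈ a.head?) (hy : y ∈ b.head?) : x ≤ y := by
  cases a with
  | nil => simp at hx
  | cons a as =>
    cases b with
    | nil => simp at hy
    | cons b bs =>
      simp only [List.head?_cons, Option.mem_some_iff] at hx hy
      subst hx; subst hy
      rcases lt_or_eq_of_le h with h | h
      · exact List.head_le_of_lt h
      · simp_all

lemma filterMap_getElem?_range {α : Type*} (T : List α) :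
    (List.range T.length).filterMap (fun i => T[i]?) = T := by
  induction T with
  | nil => simp
  | cons a T ih =>
    rw [List.length_cons, List.range_succ_eq_map, List.filterMap_cons, List.filterMap_map]
    simp [Function.comp_def, ih]

lemma rotations_filterMap_head {α : Type*} (T : List α) :
    (rotations T).filterMap List.head? = T := by
  rw [rotations, List.filterMap_map]
  rw [List.filterMap_congr (g := fun i => T[i]?) ?_]
  · exact filterMap_getElem?_range T
  · intro i hi
    have hi' := List.mem_range.mp hi
    simp only [Function.comp_apply, List.head?_append, List.head?_drop]
    rw [List.getElem?_eq_getElem hi']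
    simp

theorem first_column_eq_sorted {α : Type*} [LinearOrder α] (T : List α) :
    (sortedRotations T).filterMap List.head? = Multiset.sort (T : Multiset α) (· ≤ ·) := by
  have hperm : (sortedRotations T).Perm (rotations T) :=
    Quotient.exact (Multiset.sort_eq (rotations T : Multiset (List α)) (· ≤ ·))
  refine (fun hp h1 h2 => List.Perm.eq_of_pairwise' (r := (· ≤ ·)) h1 h2 hp) ?_ ?_ ?_
  · have p1 := hperm.filterMap List.head?
    rw [rotations_filterMap_head] at p1
    have p2 : T.Perm (Multiset.sort (T : Multiset α) (· ≤ ·)) :=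
      (Quotient.exact (Multiset.sort_eq (T : Multiset α) (· ≤ ·))).symm
    exact p1.trans p2
  · have hs : List.Pairwise (· ≤ ·) (sortedRotations T) :=
      Multiset.pairwise_sort _ _
    rw [List.pairwise_filterMap]
    exact hs.imp fun {a b} hab => fun x hx y hy => head?_le_of_le hab hx hy
  · exact Multiset.pairwise_sort _ _
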